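/- For formal power series over a commutative ring, the Dumont–Zeng contraction identity holds: given a sequence (c_n)_{n≥0}, the continued fraction c_0/(1 - c_1 t/(1 - c_2 t/(1 - ...))) equals c_0 + c_0 c_1 t/(1 - (c_1+c_2)t - c_2 c_3 t^2/(1 - (c_3+c_4)t - c_4 c_5 t^2/(1 - ...))), in the sense that the finite truncations at matching depths agree as rational functions (equivalently, the corresponding convergents agree to the appropriate order in t). -/

import Mathlib

open scoped LaurentSeries

private lemma dz_coe_eq {F : Type*} [Field F] (a b : F) (u : RatFunc F)
    (p : PowerSeries F) (hu : (u : LaurentSeries F) = HahnSeries.ofPowerSeries ℤ F p) :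
    ((1 - RatFunc.C a * RatFunc.X - RatFunc.C b * RatFunc.X ^ 2 * u : RatFunc F) :
        LaurentSeries F) =
      HahnSeries.ofPowerSeries ℤ F
        (1 - PowerSeries.C a * PowerSeries.X - PowerSeries.C b * PowerSeries.X ^ 2 * p) := by
  have hC : ∀ r : F, ((RatFunc.C r : RatFunc F) : LaurentSeries F) =
      HahnSeries.ofPowerSeries ℤ F (PowerSeries.C r) := by
    intro r
    have h := RatFunc.coe_coe (Polynomial.C r)
    rw [Polynomial.coe_C] at h
    rw [h, RatFunc.coePolynomial, RatFunc.algebraMap_C]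
  simp only [map_sub, map_one, map_mul, map_pow, hC,
    RatFunc.coe_X, hu, map_sub, map_one, map_mul, map_pow, HahnSeries.ofPowerSeries_C,
    HahnSeries.ofPowerSeries_X]

private lemma dz_aux {F : Type*} [Field F] (a b : F) (u : RatFunc F)
    (p : PowerSeries F) (hu : (u : LaurentSeries F) = HahnSeries.ofPowerSeries ℤ F p) :
    (1 - RatFunc.C a * RatFunc.X - RatFunc.C b * RatFunc.X ^ 2 * u : RatFunc F) ≠ 0 ∧
      (((1 - RatFunc.C a * RatFunc.X - RatFunc.C b * RatFunc.X ^ 2 * u : RatFunc F)⁻¹ :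
          RatFunc F) : LaurentSeries F) =
        HahnSeries.ofPowerSeries ℤ F
          ((1 - PowerSeries.C a * PowerSeries.X - PowerSeries.C b * PowerSeries.X ^ 2 * p)⁻¹) := by
  set E : RatFunc F := 1 - RatFunc.C a * RatFunc.X - RatFunc.C b * RatFunc.X ^ 2 * u with hE
  set q : PowerSeries F :=
    1 - PowerSeries.C a * PowerSeries.X - PowerSeries.C b * PowerSeries.X ^ 2 * p with hq
  have hcoe : (E : LaurentSeries F) = HahnSeries.ofPowerSeries ℤ F q := dz_coe_eq a b u p hu
  have hconst : PowerSeries.constantCoeff q = 1 := by simp [hq]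
  have hq0 : q ≠ 0 := by
    intro h; rw [h] at hconst; simp at hconst
  have hE0 : E ≠ 0 := by
    intro h
    rw [h, map_zero] at hcoe
    exact hq0 (HahnSeries.ofPowerSeries_injective (by rw [← hcoe, map_zero]))
  refine ⟨hE0, ?_⟩
  have hmul : q * q⁻¹ = 1 := PowerSeries.mul_inv_cancel q (by rw [hconst]; exact one_ne_zero)
  have h1 : (E : LaurentSeries F) * HahnSeries.ofPowerSeries ℤ F q⁻¹ = 1 := by
    rw [hcoe, ← map_mul, hmul, map_one]
  have hEinv : ((E⁻¹ : RatFunc F) : LaurentSeries F) = ((E : RatFunc F) : LaurentSeries F)⁻¹ := by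
    rw [← one_div, ← one_div, map_div₀, map_one]
  rw [hEinv]
  exact (eq_inv_of_mul_eq_one_left (by rw [mul_comm]; exact h1)).symm

/-- Dumont–Zeng contraction: the truncations (convergents) of the Stieltjes continued
fraction `c₀/(1 - c₁t/(1 - c₂t/⋯))` at even depths agree, as rational functions,
with the truncations at matching depths of the Jacobi continued fraction
`c₀ + c₀c₁t/(1 - (c₁+c₂)t - c₂c₃t²/(1 - (c₃+c₄)t - ⋯))`.
Here `T j d` is the depth-`d` tail of the S-fraction starting at level `j`,
and `U k d` the depth-`d` tail of the J-fraction starting at level `k`. -/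
theorem dumont_zeng_contraction {F : Type*} [Field F] (c : ℕ → F)
    (T U : ℕ → ℕ → RatFunc F)
    (hT0 : ∀ j, T j 0 = 1)
    (hT : ∀ j d, T j (d + 1) = (1 - RatFunc.C (c j) * RatFunc.X * T (j + 1) d)⁻¹)
    (hU0 : ∀ k, U k 0 = 0)
    (hU : ∀ k d, U k (d + 1) =
      (1 - RatFunc.C (c (2 * k - 1) + c (2 * k)) * RatFunc.X
         - RatFunc.C (c (2 * k) * c (2 * k + 1)) * RatFunc.X ^ 2 * U (k + 1) d)⁻¹) :
    ∀ d, RatFunc.C (c 0) * T 1 (2 * d) =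
      RatFunc.C (c 0) + RatFunc.C (c 0 * c 1) * RatFunc.X * U 1 d := by
  have key : ∀ d k,
      (∃ p : PowerSeries F,
        ((U (k + 1) d : RatFunc F) : LaurentSeries F) = HahnSeries.ofPowerSeries ℤ F p) ∧
      T (2 * k + 1) (2 * d) = 1 + RatFunc.C (c (2 * k + 1)) * RatFunc.X * U (k + 1) d := by
    intro d
    induction d with
    | zero =>
      intro k
      refine ⟨⟨0, by rw [hU0, map_zero, map_zero]⟩, ?_⟩
      rw [hU0, hT0, mul_zero, add_zero]
    | succ d ih =>
      intro k
      obtain ⟨⟨p, hp⟩, hTeq⟩ := ih (k + 1)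
      rw [show 2 * (k + 1) + 1 = 2 * k + 3 by omega] at hTeq
      set a1 := c (2 * k + 1) with ha1
      set a2 := c (2 * k + 2) with ha2
      set a3 := c (2 * k + 3) with ha3
      set u := U (k + 2) d with hu_def
      set E : RatFunc F := 1 - RatFunc.C (a1 + a2) * RatFunc.X
          - RatFunc.C (a2 * a3) * RatFunc.X ^ 2 * u with hEdef
      set D : RatFunc F := 1 - RatFunc.C a2 * RatFunc.X
          - RatFunc.C (a2 * a3) * RatFunc.X ^ 2 * u with hDdef
      have hUk : U (k + 1) (d + 1) = E⁻¹ := by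
        have h := hU (k + 1) d
        rw [show 2 * (k + 1) - 1 = 2 * k + 1 by omega, show 2 * (k + 1) = 2 * k + 2 by omega,
          show 2 * k + 2 + 1 = 2 * k + 3 by omega, show k + 1 + 1 = k + 2 by omega] at h
        rw [h]
      obtain ⟨hE0, hEinv⟩ := dz_aux (a1 + a2) (a2 * a3) u p hp
      obtain ⟨hD0, -⟩ := dz_aux a2 (a2 * a3) u p hp
      have hED : D = E + RatFunc.C a1 * RatFunc.X := by
        rw [hEdef, hDdef, map_add]; ring
      have hTD : T (2 * k + 2) (2 * d + 1) = D⁻¹ := by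
        rw [hT, show 2 * k + 2 + 1 = 2 * k + 3 by omega, hTeq]
        congr 1
        rw [hDdef, map_mul]
        ring
      refine ⟨⟨_, by rw [hUk]; exact hEinv⟩, ?_⟩
      rw [show 2 * (d + 1) = (2 * d + 1) + 1 by ring, hT,
        show 2 * k + 1 + 1 = 2 * k + 2 by omega, hTD, hUk]
      have hE_eq : D - RatFunc.C a1 * RatFunc.X = E := by rw [hED]; ring
      have h3 : 1 - RatFunc.C a1 * RatFunc.X * D⁻¹ = E * D⁻¹ := by
        rw [← hE_eq, sub_mul, mul_inv_cancel₀ hD0]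
      rw [h3, mul_inv, inv_inv, hED, mul_add, inv_mul_cancel₀ hE0]
      ring
  intro d
  have h := (key d 0).2
  rw [h, map_mul]
  ring
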